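/- Let n ≥ 3 be odd, q = 2^n, and α ∈ 𝔽_q^*. Then for a ∈ 𝔽_q^*, the derivative D_aF_{0,α} is 2-to-1 if and only if a = α, or a ≠ α and Tr(α/(a+α)) = 1 and Tr(α/a) = 0. Equivalently, R-Spec_q(F_{0,α}) = {α} ∪ {a ∈ 𝔽_q \ {0, α} : Tr(α/(a+α))·(Tr(α/a)+1) = 1}. -/

import Mathlib

namespace APNPaper

open Finset

variable {F : Type*} [Field F] [Fintype F] [DecidableEq F]

/-- `δ_G(a,b)`: the number of `x` with `D_aG(x) = G(x) + G(x+a) = b`. -/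
def delta (G : F → F) (a b : F) : ℕ :=
  (Finset.univ.filter fun x : F => G x + G (x + a) = b).card

/-- `∇_G(a,x) = δ_G(a, D_aG(x))`. -/
def nabla (G : F → F) (a x : F) : ℕ := delta G a (G x + G (x + a))

/-- `G` is almost perfect nonlinear. -/
def IsAPN (G : F → F) : Prop := ∀ a : F, a ≠ 0 → ∀ b : F, delta G a b ≤ 2

/-- The derivative `D_aG` is 2-to-1, i.e. `G` satisfies property `(p_a)`. -/
def TwoToOne (G : F → F) (a : F) : Prop :=
  ∀ b : F, delta G a b = 0 ∨ delta G a b = 2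

instance instDecTwoToOne (G : F → F) (a : F) : Decidable (TwoToOne G a) := by
  unfold TwoToOne; infer_instance

/-- The row spectrum `R-Spec_q(G)`. -/
def RSpec (G : F → F) : Finset F :=
  (Finset.univ.erase (0 : F)).filter fun a => TwoToOne G a

/-- `S_a = {x : ∇_G(a,x) = 2}`. -/
def Sset (G : F → F) (a : F) : Finset F :=
  Finset.univ.filter fun x : F => nabla G a x = 2

/-- `w_{S_a^c} = Σ_{b : δ_G(a,b) > 2} (δ_G(a,b)/2)²`. -/
def wS (G : F → F) (a : F) : ℤ :=
  ∑ b : F, if 2 < delta G a b then ((delta G a b / 2 : ℕ) : ℤ) ^ 2 else 0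

/-- `χ_a = 1` if `S_a = 𝔽_q`, and `0` otherwise. -/
def chi (G : F → F) (a : F) : ℤ :=
  if Sset G a = Finset.univ then 1 else 0

/-- `𝒟(G) = Σ_{a ≠ 0} (|S_a| − w_{S_a^c} + χ_a)`. -/
def Dscr (G : F → F) : ℤ :=
  ∑ a ∈ Finset.univ.erase (0 : F), (((Sset G a).card : ℤ) - wS G a + chi G a)

/-- The APN-defect `APN-def(G) = q² − 1 − 𝒟(G)`. -/
def APNdef (G : F → F) : ℤ := (Fintype.card F : ℤ) ^ 2 - 1 - Dscr G

/-- The differential uniformity `δ_G`. -/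
def diffUnif (G : F → F) : ℕ :=
  ((Finset.univ.erase (0 : F)) ×ˢ Finset.univ).sup fun p => delta G p.1 p.2

/-- The set of vanishing flats of `G`. -/
def VF (G : F → F) : Set (Finset F) :=
  {S | ∃ x y z : F, x ≠ y ∧ x ≠ z ∧ y ≠ z ∧
    G x + G y + G z + G (x + y + z) = 0 ∧ S = ({x, y, z, x + y + z} : Finset F)}

/-- The absolute trace `Tr(z) = z + z² + ⋯ + z^{2^{n-1}}` (with values in `{0,1} ⊆ F`). -/
def Tr (n : ℕ) (z : F) : F := ∑ i ∈ Finset.range n, z ^ (2 ^ i)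

/-- The modification `F_{0,α}` of the inverse function: the values of the inverse
function at `0` and `α` are swapped. -/
def Fmod (α : F) : F → F :=
  fun x => if x = 0 then α⁻¹ else if x = α then 0 else x⁻¹

section Aux
variable [CharP F 2]

lemma two_eq_zero' : (2 : F) = 0 := CharTwo.two_eq_zero

lemma add_self' (x : F) : x + x = 0 := by
  rw [← two_mul, CharTwo.two_eq_zero, zero_mul]

lemma add_eq_zero_iff' (x y : F) : x + y = 0 ↔ x = y := by
  constructor
  · intro h; rw [add_eq_zero_iff_eq_neg, CharTwo.neg_eq] at h; exact h
  · rintro rfl; exact add_self' _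

lemma Tr_add (n : ℕ) (x y : F) : Tr n (x + y) = Tr n x + Tr n y := by
  unfold Tr
  rw [← Finset.sum_add_distrib]
  exact Finset.sum_congr rfl fun i _ => add_pow_char_pow ..

lemma Tr_zero (n : ℕ) : Tr n (0 : F) = 0 := by
  unfold Tr
  refine Finset.sum_eq_zero fun i _ => zero_pow (by positivity)

lemma Tr_sq (n : ℕ) (hcard : Fintype.card F = 2 ^ n) (z : F) : Tr n (z ^ 2) = Tr n z := by
  have hz : z ^ 2 ^ n = z := by rw [← hcard]; exact FiniteField.pow_card z
  have h1 : Tr n (z ^ 2) = ∑ i ∈ Finset.range n, z ^ 2 ^ (i + 1) := by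
    unfold Tr
    refine Finset.sum_congr rfl fun i _ => ?_
    rw [← pow_mul, pow_succ, mul_comm]
  have h2 : ∑ i ∈ Finset.range (n + 1), z ^ 2 ^ i
      = (∑ i ∈ Finset.range n, z ^ 2 ^ (i + 1)) + z := by
    rw [Finset.sum_range_succ' (fun i => z ^ 2 ^ i) n]
    norm_num
  have h3 : ∑ i ∈ Finset.range (n + 1), z ^ 2 ^ i = Tr n z + z := by
    rw [Finset.sum_range_succ, hz]; rfl
  have h4 := h2.symm.trans h3
  rw [h1]
  exact add_right_cancel h4

lemma Tr_sq_self (n : ℕ) (hcard : Fintype.card F = 2 ^ n) (z : F) :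
    (Tr n z) ^ 2 = Tr n z := by
  have h1 : (Tr n z) ^ 2 = Tr n (z ^ 2) := by
    unfold Tr
    rw [sum_pow_char]
    exact Finset.sum_congr rfl fun i _ => by rw [← pow_mul, ← pow_mul, mul_comm]
  rw [h1, Tr_sq n hcard]

lemma Tr_eq_zero_or_one (n : ℕ) (hcard : Fintype.card F = 2 ^ n) (z : F) :
    Tr n z = 0 ∨ Tr n z = 1 := by
  have h := Tr_sq_self n hcard z
  have h2 : Tr n z * (Tr n z - 1) = 0 := by ring_nf; linear_combination h
  rcases mul_eq_zero.1 h2 with h3 | h3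
  · exact Or.inl h3
  · exact Or.inr (by linear_combination h3)

lemma Tr_one (n : ℕ) (hodd : Odd n) : Tr n (1 : F) = 1 := by
  unfold Tr
  obtain ⟨k, rfl⟩ := hodd
  simp only [one_pow, Finset.sum_const, Finset.card_range, nsmul_eq_mul, mul_one]
  push_cast
  rw [two_eq_zero']
  ring

lemma Tr_quad_zero (n : ℕ) (hcard : Fintype.card F = 2 ^ n) (z : F) :
    Tr n (z ^ 2 + z) = 0 := by
  rw [Tr_add, Tr_sq n hcard, add_self']

lemma exists_quad (n : ℕ) (hodd : Odd n) (hcard : Fintype.card F = 2 ^ n)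
    (c : F) (hc : Tr n c = 0) : ∃ z : F, z ^ 2 + z = c := by
  classical
  have h2 : (2 : F) = 0 := two_eq_zero'
  set f : F →+ F :=
    { toFun := fun z => z ^ 2 + z
      map_zero' := by ring
      map_add' := fun x y => by ring_nf; linear_combination (x * y) * h2 } with hf
  set T : F →+ F :=
    { toFun := Tr n
      map_zero' := Tr_zero n
      map_add' := Tr_add n } with hT
  have hker : (f.ker : Set F) = {0, 1} := by
    ext z
    simp only [SetLike.mem_coe, AddMonoidHom.mem_ker, Set.mem_insert_iff,
      Set.mem_singleton_iff, hf, AddMonoidHom.coe_mk, ZeroHom.coe_mk]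
    constructor
    · intro h
      have hz : z * (z + 1) = 0 := by linear_combination h
      rcases mul_eq_zero.1 hz with h3 | h3
      · exact Or.inl h3
      · exact Or.inr (by linear_combination h3 - h2)
    · rintro (rfl | rfl)
      · ring
      · linear_combination h2
  have hrange : (T.range : Set F) = {0, 1} := by
    ext z
    simp only [SetLike.mem_coe, AddMonoidHom.mem_range, Set.mem_insert_iff,
      Set.mem_singleton_iff]
    constructor
    · rintro ⟨w, rfl⟩; exact Tr_eq_zero_or_one n hcard w
    · rintro (rfl | rfl)
      · exact ⟨0, Tr_zero n⟩
      · exact ⟨1, Tr_one n hodd⟩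
  have hcard_ker_f : Nat.card f.ker = 2 := by
    have : Nat.card f.ker = ((f.ker : Set F)).ncard := Nat.card_coe_set_eq _
    rw [this, hker, Set.ncard_pair (zero_ne_one)]
  have hcard_range_T : Nat.card T.range = 2 := by
    have : Nat.card T.range = ((T.range : Set F)).ncard := Nat.card_coe_set_eq _
    rw [this, hrange, Set.ncard_pair (zero_ne_one)]
  have e1 : Nat.card F = Nat.card f.range * Nat.card f.ker := by
    rw [AddSubgroup.card_eq_card_quotient_mul_card_addSubgroup f.ker]
    congr 1
    exact Nat.card_congr (QuotientAddGroup.quotientKerEquivRange f).toEquiv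
  have e2 : Nat.card F = Nat.card T.range * Nat.card T.ker := by
    rw [AddSubgroup.card_eq_card_quotient_mul_card_addSubgroup T.ker]
    congr 1
    exact Nat.card_congr (QuotientAddGroup.quotientKerEquivRange T).toEquiv
  have ecard : Nat.card f.range = Nat.card T.ker := by
    rw [hcard_ker_f] at e1; rw [hcard_range_T] at e2
    omega
  have hsub : (f.range : Set F) ⊆ (T.ker : Set F) := by
    rintro x ⟨z, rfl⟩
    show T (f z) = 0
    show Tr n (z ^ 2 + z) = 0
    exact Tr_quad_zero n hcard z
  have heq : (f.range : Set F) = (T.ker : Set F) := by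
    refine Set.eq_of_subset_of_ncard_le hsub ?_ (Set.toFinite _)
    rw [← Nat.card_coe_set_eq, ← Nat.card_coe_set_eq]
    exact le_of_eq ecard.symm
  have : c ∈ (T.ker : Set F) := hc
  rw [← heq] at this
  obtain ⟨z, hz⟩ := this
  exact ⟨z, hz⟩

end Aux

section Main
variable [CharP F 2]

lemma add_add_cancel' (x a : F) : x + a + a = x := by
  rw [add_assoc, add_self', add_zero]

lemma twoToOne_iff (G : F → F) (a : F) (ha : a ≠ 0) :
    TwoToOne G a ↔
      ∀ x y : F, G x + G (x + a) = G y + G (y + a) → y = x ∨ y = x + a := by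
  have hxne : ∀ x : F, x ≠ x + a := fun x h => ha (by linear_combination -h)
  constructor
  · intro h x y hxy
    set s := Finset.univ.filter fun t : F => G t + G (t + a) = G x + G (x + a) with hs
    have hx : x ∈ s := by simp [hs]
    have hy : y ∈ s := by simp [hs, hxy.symm]
    have hcard2 : s.card = 2 := by
      rcases h (G x + G (x + a)) with h0 | h2
      · exfalso
        have : s = ∅ := Finset.card_eq_zero.1 h0
        rw [this] at hx; simp at hx
      · exact h2
    have hxa : x + a ∈ s := by
      simp only [hs, Finset.mem_filter, Finset.mem_univ, true_and]
      rw [add_add_cancel', add_comm]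
    have hsub : ({x, x + a} : Finset F) ⊆ s := by
      intro t ht
      rcases Finset.mem_insert.1 ht with rfl | ht
      · exact hx
      · rw [Finset.mem_singleton.1 ht]; exact hxa
    have hpair : ({x, x + a} : Finset F).card = 2 := Finset.card_pair (hxne x)
    have : ({x, x + a} : Finset F) = s :=
      Finset.eq_of_subset_of_card_le hsub (by rw [hcard2, hpair])
    have := this ▸ hy
    rcases Finset.mem_insert.1 this with h' | h'
    · exact Or.inl h'
    · exact Or.inr (Finset.mem_singleton.1 h')
  · intro h b
    set s := Finset.univ.filter fun t : F => G t + G (t + a) = b with hs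
    rcases Finset.eq_empty_or_nonempty s with he | ⟨x, hx⟩
    · left; rw [delta, ← hs, he]; rfl
    · right
      have hxb : G x + G (x + a) = b := by
        simpa [hs] using hx
      have : s = {x, x + a} := by
        ext y
        simp only [hs, Finset.mem_filter, Finset.mem_univ, true_and,
          Finset.mem_insert, Finset.mem_singleton]
        constructor
        · intro hy
          exact h x y (by rw [hxb, hy])
        · rintro (rfl | rfl)
          · exact hxb
          · rw [add_add_cancel', add_comm]; exact hxb
      rw [delta, ← hs, this]
      exact Finset.card_pair (hxne x)

lemma inv_sum (a x : F) (hx : x ≠ 0) (hxa : x + a ≠ 0) :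
    x⁻¹ + (x + a)⁻¹ = a / (x ^ 2 + a * x) := by
  have h2 : (2 : F) = 0 := two_eq_zero'
  have hd : x ^ 2 + a * x ≠ 0 := fun h => by
    rcases mul_eq_zero.1 (show x * (x + a) = 0 by linear_combination h) with h3 | h3
    exacts [hx h3, hxa h3]
  rw [inv_eq_one_div, inv_eq_one_div, div_add_div _ _ hx hxa,
    show 1 * (x + a) + x * 1 = a from by linear_combination x * h2,
    show x * (x + a) = x ^ 2 + a * x from by ring]

lemma trace_of_sol (n : ℕ) (hcard : Fintype.card F = 2 ^ n) (a b x : F)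
    (ha : a ≠ 0) (hx : x ≠ 0) (hxa : x + a ≠ 0)
    (heq : x⁻¹ + (x + a)⁻¹ = b) : Tr n (1 / (a * b)) = 0 := by
  have h2 : (2 : F) = 0 := two_eq_zero'
  have hd : x ^ 2 + a * x ≠ 0 := fun h => by
    rcases mul_eq_zero.1 (show x * (x + a) = 0 by linear_combination h) with h3 | h3
    exacts [hx h3, hxa h3]
  rw [inv_sum a x hx hxa] at heq
  have hb : b ≠ 0 := by
    rw [← heq]; exact div_ne_zero ha hd
  have key : 1 / (a * b) = (x / a) ^ 2 + x / a := by
    rw [← heq]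
    field_simp
  rw [key]
  exact Tr_quad_zero n hcard (x / a)

lemma sol_of_trace (n : ℕ) (hodd : Odd n) (hcard : Fintype.card F = 2 ^ n)
    (a b : F) (ha : a ≠ 0) (hb : b ≠ 0) (htr : Tr n (1 / (a * b)) = 0) :
    ∃ x : F, x ≠ 0 ∧ x + a ≠ 0 ∧ x⁻¹ + (x + a)⁻¹ = b := by
  obtain ⟨z, hz⟩ := exists_quad n hodd hcard _ htr
  have h2 : (2 : F) = 0 := two_eq_zero'
  have hab : a * b ≠ 0 := mul_ne_zero ha hb
  field_simp at hz
  have hz0 : z ≠ 0 := by rintro rfl; norm_num at hz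
  have hz1 : z + 1 ≠ 0 := by
    intro h
    have hzz : z = 1 := by linear_combination h - h2
    rw [hzz, show ((1:F) + 1) = 0 from by linear_combination h2] at hz
    norm_num at hz
  refine ⟨a * z, mul_ne_zero ha hz0, ?_, ?_⟩
  · intro h
    have : a * (z + 1) = 0 := by linear_combination h
    rcases mul_eq_zero.1 this with h3 | h3
    exacts [ha h3, hz1 h3]
  · have hmaz : a * z + a ≠ 0 := by
      intro h
      have : a * (z + 1) = 0 := by linear_combination h
      rcases mul_eq_zero.1 this with h3 | h3
      exacts [ha h3, hz1 h3]
    rw [inv_sum a (a * z) (mul_ne_zero ha hz0) hmaz]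
    have hd : (a * z) ^ 2 + a * (a * z) ≠ 0 := fun h => by
      rcases mul_eq_zero.1 (show (a * z) * (a * z + a) = 0 by linear_combination h) with h3 | h3
      exacts [mul_ne_zero ha hz0 h3, hmaz h3]
    rw [div_eq_iff hd]
    linear_combination (-a) * hz

lemma Fmod_zero' (α : F) : Fmod α 0 = α⁻¹ := by simp [Fmod]

lemma Fmod_self (α : F) (hα : α ≠ 0) : Fmod α α = 0 := by simp [Fmod, hα]

lemma Fmod_other (α x : F) (h0 : x ≠ 0) (hx : x ≠ α) : Fmod α x = x⁻¹ := by
  simp [Fmod, h0, hx]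

lemma inv_inj (a x y : F) (ha : a ≠ 0) (hx0 : x ≠ 0) (hxa : x + a ≠ 0)
    (hy0 : y ≠ 0) (hya : y + a ≠ 0)
    (h : x⁻¹ + (x + a)⁻¹ = y⁻¹ + (y + a)⁻¹) : y = x ∨ y = x + a := by
  have h2 : (2 : F) = 0 := two_eq_zero'
  have hdx : x ^ 2 + a * x ≠ 0 := fun hh => by
    rcases mul_eq_zero.1 (show x * (x + a) = 0 by linear_combination hh) with h3 | h3
    exacts [hx0 h3, hxa h3]
  have hdy : y ^ 2 + a * y ≠ 0 := fun hh => by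
    rcases mul_eq_zero.1 (show y * (y + a) = 0 by linear_combination hh) with h3 | h3
    exacts [hy0 h3, hya h3]
  rw [inv_sum a x hx0 hxa, inv_sum a y hy0 hya, div_eq_div_iff hdx hdy] at h
  have h3 : y ^ 2 + a * y = x ^ 2 + a * x := mul_left_cancel₀ ha (by linear_combination h)
  have key : (x + y) * (x + y + a) = 0 := by
    linear_combination h3 + (x ^ 2 + x * y + a * x) * h2
  rcases mul_eq_zero.1 key with hk | hk
  · exact Or.inl ((add_eq_zero_iff' x y).1 hk).symm
  · exact Or.inr (by linear_combination hk - (x + a) * h2)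

end Main


/-- the row spectrum of `F_{0,α}` for odd `n ≥ 3`. -/
theorem stmt_6 (n : ℕ) (hn : 3 ≤ n) (hodd : Odd n)
    [CharP F 2] (hcard : Fintype.card F = 2 ^ n)
    (α : F) (hα : α ≠ 0) :
    ∀ a : F, a ≠ 0 →
      (TwoToOne (Fmod α) a ↔
        (a = α ∨ (a ≠ α ∧ Tr n (α / (a + α)) = 1 ∧ Tr n (α / a) = 0))) := by
  intro a ha
  have h2 : (2 : F) = 0 := two_eq_zero'
  have haa : a + a = 0 := add_self' a
  rw [twoToOne_iff (Fmod α) a ha]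
  constructor
  · intro h
    by_cases haα : a = α
    · exact Or.inl haα
    right
    have hαa0 : α + a ≠ 0 := fun hh => haα ((add_eq_zero_iff' α a).1 hh).symm
    have haα0 : a + α ≠ 0 := fun hh => haα ((add_eq_zero_iff' a α).1 hh)
    refine ⟨haα, ?_, ?_⟩
    · by_contra hT
      have hT0 : Tr n (α / (a + α)) = 0 := (Tr_eq_zero_or_one n hcard _).resolve_right hT
      set b : F := α⁻¹ + a⁻¹ with hbdef
      have hb : b ≠ 0 := by
        intro hh
        exact haα (inv_injective ((add_eq_zero_iff' α⁻¹ a⁻¹).1 hh)).symm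
      have hid : 1 / (a * b) = α / (a + α) := by
        rw [hbdef]; field_simp
      obtain ⟨x, hx0, hxa, hsol⟩ :=
        sol_of_trace n hodd hcard a b ha hb (by rw [hid]; exact hT0)
      have hcontra : α⁻¹ + (α + a)⁻¹ ≠ b := by
        intro hh
        have h3 : (α + a)⁻¹ = a⁻¹ := add_left_cancel (hh.trans hbdef)
        have h4 : α + a = a := inv_injective h3
        exact hα (by linear_combination h4)
      have hxα : x ≠ α := by rintro rfl; exact hcontra hsol
      have hxaα : x + a ≠ α := by
        intro hh
        have hx' : x = α + a := by linear_combination hh - a * h2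
        subst hx'
        apply hcontra
        rw [← hsol, add_add_cancel', add_comm]
      have hD0 : Fmod α 0 + Fmod α (0 + a) = b := by
        rw [zero_add, Fmod_zero', Fmod_other α a ha haα]
      have hDx : Fmod α x + Fmod α (x + a) = b := by
        rw [Fmod_other α x hx0 hxα, Fmod_other α (x + a) hxa hxaα]
        exact hsol
      rcases h 0 x (by rw [hD0, hDx]) with hc | hc
      · exact hx0 hc
      · rw [zero_add] at hc
        exact hxa (by rw [hc]; exact haa)
    · by_contra hT
      have hT1 : Tr n (α / a) = 1 := (Tr_eq_zero_or_one n hcard _).resolve_left hT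
      set b : F := (α + a)⁻¹ with hbdef
      have hb : b ≠ 0 := inv_ne_zero hαa0
      have hid : 1 / (a * b) = 1 + α / a := by
        rw [hbdef]; field_simp; ring
      have htr : Tr n (1 / (a * b)) = 0 := by
        rw [hid, Tr_add, Tr_one n hodd, hT1, add_self']
      obtain ⟨x, hx0, hxa, hsol⟩ := sol_of_trace n hodd hcard a b ha hb htr
      have hcontra : α⁻¹ + (α + a)⁻¹ ≠ b := by
        intro hh
        rw [hbdef] at hh
        have h3 : α⁻¹ = 0 := by
          have := add_right_cancel (hh.trans (zero_add ((α + a)⁻¹)).symm)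
          exact this
        exact hα (inv_eq_zero.1 h3)
      have hxα : x ≠ α := by rintro rfl; exact hcontra hsol
      have hxaα : x + a ≠ α := by
        intro hh
        have hx' : x = α + a := by linear_combination hh - a * h2
        subst hx'
        apply hcontra
        rw [← hsol, add_add_cancel', add_comm]
      have hDα : Fmod α α + Fmod α (α + a) = b := by
        rw [Fmod_self α hα, Fmod_other α (α + a) hαa0 (fun hh => ha (by linear_combination hh)),
          zero_add]
      have hDx : Fmod α x + Fmod α (x + a) = b := by
        rw [Fmod_other α x hx0 hxα, Fmod_other α (x + a) hxa hxaα]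
        exact hsol
      rcases h α x (by rw [hDα, hDx]) with hc | hc
      · exact hxα hc
      · exact hxaα (by rw [hc, add_add_cancel'])
  · rintro (heqaα | ⟨haα, hT1, hT2⟩)
    · -- case a = α
      subst heqaα
      intro x y hxy
      have hval : ∀ z : F, z ≠ 0 → z ≠ a → Fmod a z + Fmod a (z + a) = z⁻¹ + (z + a)⁻¹ ∧
          z + a ≠ 0 := by
        intro z hz0 hza
        have hza0 : z + a ≠ 0 := fun hh => hza ((add_eq_zero_iff' z a).1 hh)
        have hzaa : z + a ≠ a := fun hh => hz0 (by linear_combination hh)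
        exact ⟨by rw [Fmod_other a z hz0 hza, Fmod_other a (z + a) hza0 hzaa], hza0⟩
      have hvin : ∀ z : F, z = 0 ∨ z = a → Fmod a z + Fmod a (z + a) = a⁻¹ := by
        rintro z (hz | hz)
        · rw [hz, zero_add, Fmod_zero', Fmod_self a ha, add_zero]
        · rw [hz, haa, Fmod_self a ha, Fmod_zero', zero_add]
      have hnos : ∀ z : F, z ≠ 0 → z ≠ a → Fmod a z + Fmod a (z + a) ≠ a⁻¹ := by
        intro z hz0 hza hh
        obtain ⟨hv, hza0⟩ := hval z hz0 hza
        rw [hv] at hh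
        have h0 := trace_of_sol n hcard a a⁻¹ z ha hz0 hza0 hh
        rw [mul_inv_cancel₀ ha, div_one, Tr_one n hodd] at h0
        exact one_ne_zero h0
      by_cases hx : x = 0 ∨ x = a
      · by_cases hy : y = 0 ∨ y = a
        · rcases hx with hx | hx <;> rcases hy with hy | hy <;> rw [hx, hy]
          · exact Or.inl rfl
          · exact Or.inr (zero_add a).symm
          · exact Or.inr haa.symm
          · exact Or.inl rfl
        · push_neg at hy
          exact absurd (by rw [← hxy, hvin x hx]) (hnos y hy.1 hy.2)
      · push_neg at hx
        by_cases hy : y = 0 ∨ y = a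
        · exact absurd (by rw [hxy, hvin y hy]) (hnos x hx.1 hx.2)
        · push_neg at hy
          obtain ⟨hvx, hxa0⟩ := hval x hx.1 hx.2
          obtain ⟨hvy, hya0⟩ := hval y hy.1 hy.2
          exact inv_inj a x y ha hx.1 hxa0 hy.1 hya0 (by rw [← hvx, ← hvy, hxy])
    · -- case a ≠ α
      have hαa0 : α + a ≠ 0 := fun hh => haα ((add_eq_zero_iff' α a).1 hh).symm
      have hv1 : ∀ z : F, z = 0 ∨ z = a → Fmod α z + Fmod α (z + a) = α⁻¹ + a⁻¹ := by
        rintro z (hz | hz)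
        · rw [hz, zero_add, Fmod_zero', Fmod_other α a ha haα]
        · rw [hz, haa, Fmod_zero', Fmod_other α a ha haα, add_comm]
      have hv2 : ∀ z : F, z = α ∨ z = α + a →
          Fmod α z + Fmod α (z + a) = (α + a)⁻¹ := by
        have hαaα : α + a ≠ α := fun hh => ha (by linear_combination hh)
        rintro z (hz | hz)
        · rw [hz, Fmod_self α hα, Fmod_other α (α + a) hαa0 hαaα, zero_add]
        · rw [hz, add_add_cancel', Fmod_self α hα, Fmod_other α (α + a) hαa0 hαaα, add_zero]
      have hv3 : ∀ z : F, z ≠ 0 → z ≠ a → z ≠ α → z ≠ α + a →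
          Fmod α z + Fmod α (z + a) = z⁻¹ + (z + a)⁻¹ ∧ z + a ≠ 0 := by
        intro z hz0 hza hzα hzαa
        have hza0 : z + a ≠ 0 := fun hh => hza ((add_eq_zero_iff' z a).1 hh)
        have hzaα : z + a ≠ α := fun hh => hzαa (by linear_combination hh - a * h2)
        exact ⟨by rw [Fmod_other α z hz0 hzα, Fmod_other α (z + a) hza0 hzaα], hza0⟩
      have hne12 : α⁻¹ + a⁻¹ ≠ (α + a)⁻¹ := by
        intro he
        rw [inv_add_inv hα ha] at he
        have he' : (α + a) * (α + a) = α * a := by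
          field_simp [hαa0] at he
          linear_combination he
        have key : (a / α) ^ 2 + a / α = 1 := by
          field_simp
          linear_combination he' - α ^ 2 * h2
        have h0 := Tr_quad_zero n hcard (a / α)
        rw [key, Tr_one n hodd] at h0
        exact one_ne_zero h0
      have hnos1 : ∀ z : F, z ≠ 0 → z + a ≠ 0 → z⁻¹ + (z + a)⁻¹ ≠ α⁻¹ + a⁻¹ := by
        intro z hz0 hza heq
        have hbne : α⁻¹ + a⁻¹ ≠ 0 := by
          intro hh
          exact haα (inv_injective ((add_eq_zero_iff' α⁻¹ a⁻¹).1 hh)).symm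
        have h0 := trace_of_sol n hcard a _ z ha hz0 hza heq
        have haα0' : a + α ≠ 0 := by rw [add_comm]; exact hαa0
        have hid : 1 / (a * (α⁻¹ + a⁻¹)) = α / (a + α) := by
          rw [inv_add_inv hα ha]
          field_simp
          ring
        rw [hid, hT1] at h0
        exact one_ne_zero h0
      have hnos2 : ∀ z : F, z ≠ 0 → z + a ≠ 0 → z⁻¹ + (z + a)⁻¹ ≠ (α + a)⁻¹ := by
        intro z hz0 hza heq
        have h0 := trace_of_sol n hcard a _ z ha hz0 hza heq
        have hid : 1 / (a * (α + a)⁻¹) = 1 + α / a := by field_simp; ring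
        rw [hid, Tr_add, Tr_one n hodd, hT2, add_zero] at h0
        exact one_ne_zero h0
      have classify : ∀ z : F, (z = 0 ∨ z = a) ∨ (z = α ∨ z = α + a) ∨
          (z ≠ 0 ∧ z ≠ a ∧ z ≠ α ∧ z ≠ α + a) := by
        intro z; tauto
      intro x y hxy
      rcases classify x with hx | hx | hx
      · rcases classify y with hy | hy | hy
        · rcases hx with hx | hx <;> rcases hy with hy | hy <;> rw [hx, hy]
          · exact Or.inl rfl
          · exact Or.inr (zero_add a).symm
          · exact Or.inr haa.symm
          · exact Or.inl rfl
        · exact absurd (by rw [← hv1 x hx, hxy, hv2 y hy]) hne12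
        · obtain ⟨hvy, hya0⟩ := hv3 y hy.1 hy.2.1 hy.2.2.1 hy.2.2.2
          exact absurd (by rw [← hvy, ← hxy, hv1 x hx]) (hnos1 y hy.1 hya0)
      · rcases classify y with hy | hy | hy
        · exact absurd (by rw [← hv1 y hy, ← hxy, hv2 x hx]) hne12
        · rcases hx with hx | hx <;> rcases hy with hy | hy <;> rw [hx, hy]
          · exact Or.inl rfl
          · exact Or.inr rfl
          · exact Or.inr (add_add_cancel' α a).symm
          · exact Or.inl rfl
        · obtain ⟨hvy, hya0⟩ := hv3 y hy.1 hy.2.1 hy.2.2.1 hy.2.2.2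
          exact absurd (by rw [← hvy, ← hxy, hv2 x hx]) (hnos2 y hy.1 hya0)
      · obtain ⟨hvx, hxa0⟩ := hv3 x hx.1 hx.2.1 hx.2.2.1 hx.2.2.2
        rcases classify y with hy | hy | hy
        · exact absurd (by rw [← hvx, hxy, hv1 y hy]) (hnos1 x hx.1 hxa0)
        · exact absurd (by rw [← hvx, hxy, hv2 y hy]) (hnos2 x hx.1 hxa0)
        · obtain ⟨hvy, hya0⟩ := hv3 y hy.1 hy.2.1 hy.2.2.1 hy.2.2.2
          exact inv_inj a x y ha hx.1 hxa0 hy.1 hya0 (by rw [← hvx, ← hvy, hxy])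


end APNPaper
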